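/- Let Ω ⊆ ℝ^N be a nonempty bounded open set, let L ≥ 0, and let u : ℝ^N → ℝ satisfy: u(x) = 0 for every x ∉ Ω; u is continuously differentiable on Ω with ‖∇u(x)‖ ≤ L for every x ∈ Ω; and for every ε > 0 there exists an open set V ⊆ ℝ^N with ∂Ω ⊆ V such that |u(x)| < ε for all x ∈ V ∩ Ω. Then u is Lipschitz continuous on ℝ^N with Lipschitz constant L, i.e. |u(x) − u(y)| ≤ L·|x − y| for all x, y ∈ ℝ^N. -/

import Mathlib

open Set Metric

/-- A function vanishing outside `Ω`, `C¹` on `Ω` with gradient bounded by `L`, and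
tending to `0` uniformly at `∂Ω`, is globally Lipschitz with constant `L`. -/
theorem lipschitz_extension_by_zero
    (N : ℕ)
    (Ω : Set (EuclideanSpace ℝ (Fin N)))
    (hΩne : Ω.Nonempty) (hΩbd : Bornology.IsBounded Ω) (hΩop : IsOpen Ω)
    (L : ℝ) (hL : 0 ≤ L)
    (u : EuclideanSpace ℝ (Fin N) → ℝ)
    (hu_zero : ∀ x, x ∉ Ω → u x = 0)
    (hu_c1 : ContDiffOn ℝ 1 u Ω)
    (hu_grad : ∀ x ∈ Ω, ‖gradient u x‖ ≤ L)
    (hbc : ∀ ε > 0, ∃ V : Set (EuclideanSpace ℝ (Fin N)), IsOpen V ∧ frontier Ω ⊆ V ∧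
      ∀ x ∈ V ∩ Ω, |u x| < ε) :
    ∀ x y : EuclideanSpace ℝ (Fin N), |u x - u y| ≤ L * ‖x - y‖ := by
  have hdiff : ∀ z ∈ Ω, HasFDerivAt u (fderiv ℝ u z) z := fun z hz =>
    ((hu_c1.differentiableOn one_ne_zero).differentiableAt (hΩop.mem_nhds hz)).hasFDerivAt
  have hfd_norm : ∀ z ∈ Ω, ‖fderiv ℝ u z‖ ≤ L := by
    intro z hz
    have h := hu_grad z hz
    rwa [gradient, LinearIsometryEquiv.norm_map] at h
  -- Mean value bound when the whole segment lies in Ω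
  have segA : ∀ x y : EuclideanSpace ℝ (Fin N), segment ℝ x y ⊆ Ω →
      |u x - u y| ≤ L * ‖x - y‖ := by
    intro x y hseg
    have h := (convex_segment x y).norm_image_sub_le_of_norm_hasFDerivWithin_le
      (f := u) (f' := fun z => fderiv ℝ u z)
      (fun z hz => (hdiff z (hseg hz)).hasFDerivWithinAt)
      (fun z hz => hfd_norm z (hseg hz))
      (right_mem_segment ℝ x y) (left_mem_segment ℝ x y)
    simpa [Real.norm_eq_abs] using h
  -- key helper: if the line from x to y stays in Ω until time t₀ and exits at t₀,
  -- then |u x| ≤ L * t₀ * ‖x - y‖.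
  have helper : ∀ x y : EuclideanSpace ℝ (Fin N), ∀ t₀ : ℝ, 0 ≤ t₀ →
      (∀ s : ℝ, 0 ≤ s → s < t₀ → x + s • (y - x) ∈ Ω) → x + t₀ • (y - x) ∉ Ω →
      |u x| ≤ L * t₀ * ‖x - y‖ := by
    intro x y t₀ ht0 hin hout
    rcases eq_or_lt_of_le ht0 with h0 | h0
    · have hx : x ∉ Ω := by
        have : x + t₀ • (y - x) = x := by rw [← h0]; simp
        rwa [this] at hout
      rw [hu_zero x hx, abs_zero]
      positivity
    · set γ : ℝ → EuclideanSpace ℝ (Fin N) := fun t => x + t • (y - x) with hγ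
      have hγcont : Continuous γ := by fun_prop
      have hnear : ∀ O : Set (EuclideanSpace ℝ (Fin N)), IsOpen O → γ t₀ ∈ O →
          ∃ s : ℝ, 0 ≤ s ∧ s < t₀ ∧ γ s ∈ O := by
        intro O hO hzO
        have hpre : IsOpen (γ ⁻¹' O) := hO.preimage hγcont
        obtain ⟨δ, hδ, hball⟩ := Metric.isOpen_iff.mp hpre t₀ hzO
        refine ⟨max 0 (t₀ - δ/2), le_max_left _ _, ?_, ?_⟩
        · exact max_lt h0 (by linarith)
        · apply hball
          have hs1 : t₀ - δ/2 ≤ max 0 (t₀ - δ/2) := le_max_right _ _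
          have hs2 : max 0 (t₀ - δ/2) ≤ t₀ := max_le h0.le (by linarith)
          rw [Metric.mem_ball, Real.dist_eq, abs_sub_lt_iff]
          constructor <;> linarith
      have key : ∀ ε : ℝ, 0 < ε → |u x| ≤ L * t₀ * ‖x - y‖ + ε := by
        intro ε hε
        obtain ⟨V, hVop, hVfr, hVε⟩ := hbc ε hε
        have hzfr : γ t₀ ∈ frontier Ω := by
          rw [hΩop.frontier_eq, Set.mem_diff]
          refine ⟨?_, hout⟩
          rw [_root_.mem_closure_iff]
          intro O hO hzO
          obtain ⟨s, hs0, hst, hsO⟩ := hnear O hO hzO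
          exact ⟨γ s, hsO, hin s hs0 hst⟩
        obtain ⟨s, hs0, hst, hsV⟩ := hnear V hVop (hVfr hzfr)
        have hsΩ : γ s ∈ Ω := hin s hs0 hst
        have hus : |u (γ s)| < ε := hVε (γ s) ⟨hsV, hsΩ⟩
        have hseg : segment ℝ x (γ s) ⊆ Ω := by
          rw [segment_eq_image']
          rintro p ⟨θ, ⟨hθ0, hθ1⟩, rfl⟩
          have heq : x + θ • (γ s - x) = x + (θ * s) • (y - x) := by
            have : γ s - x = s • (y - x) := by simp [hγ]
            rw [this, smul_smul]
          show x + θ • (γ s - x) ∈ Ω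
          rw [heq]
          exact hin (θ * s) (mul_nonneg hθ0 hs0)
            (lt_of_le_of_lt (by nlinarith) hst)
        have hd := segA x (γ s) hseg
        have hnorm : ‖x - γ s‖ = s * ‖x - y‖ := by
          have : x - γ s = s • (x - y) := by
            simp only [hγ]
            module
          rw [this, norm_smul, Real.norm_eq_abs, abs_of_nonneg hs0]
        rw [hnorm] at hd
        have htriv : |u x| ≤ |u x - u (γ s)| + |u (γ s)| := by
          calc |u x| = |u x - u (γ s) + u (γ s)| := by ring_nf
            _ ≤ |u x - u (γ s)| + |u (γ s)| := abs_add_le _ _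
        nlinarith [htriv, hd, hus.le,
          mul_nonneg (mul_nonneg hL (sub_nonneg.mpr hst.le)) (norm_nonneg (x - y))]
      exact le_of_forall_pos_le_add key
  -- Main argument
  intro x y
  by_cases hall : ∀ t : ℝ, t ∈ Icc (0:ℝ) 1 → x + t • (y - x) ∈ Ω
  · apply segA
    rw [segment_eq_image']
    rintro p ⟨θ, hθ, rfl⟩
    exact hall θ hθ
  · push_neg at hall
    obtain ⟨t, htI, htΩ⟩ := hall
    set T : Set ℝ := Icc (0:ℝ) 1 ∩ (fun t : ℝ => x + t • (y - x)) ⁻¹' Ωᶜ with hT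
    have hTne : T.Nonempty := ⟨t, htI, htΩ⟩
    have hTclosed : IsClosed T :=
      isClosed_Icc.inter (hΩop.isClosed_compl.preimage (by fun_prop))
    have hTbb : BddBelow T := ⟨0, fun s hs => hs.1.1⟩
    have hTba : BddAbove T := ⟨1, fun s hs => hs.1.2⟩
    have ht₁T : sInf T ∈ T := hTclosed.csInf_mem hTne hTbb
    have ht₂T : sSup T ∈ T := hTclosed.csSup_mem hTne hTba
    set t₁ := sInf T
    set t₂ := sSup T
    have h1 : |u x| ≤ L * t₁ * ‖x - y‖ := by
      apply helper x y t₁ ht₁T.1.1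
      · intro s hs0 hst
        by_contra h
        have hmem : s ∈ T := ⟨⟨hs0, le_trans hst.le ht₁T.1.2⟩, h⟩
        exact absurd (csInf_le hTbb hmem) (not_le.mpr hst)
      · exact ht₁T.2
    have h2 : |u y| ≤ L * (1 - t₂) * ‖y - x‖ := by
      apply helper y x (1 - t₂) (by linarith [ht₂T.1.2])
      · intro s hs0 hst
        have heq : y + s • (x - y) = x + (1 - s) • (y - x) := by module
        rw [heq]
        by_contra h
        have hmem : (1 - s) ∈ T := ⟨⟨by linarith [ht₂T.1.1], by linarith⟩, h⟩
        have := le_csSup hTba hmem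
        linarith
      · have heq : y + (1 - t₂) • (x - y) = x + t₂ • (y - x) := by module
        rw [heq]
        exact ht₂T.2
    have ht12 : t₁ ≤ t₂ := csInf_le_csSup hTne hTbb hTba
    have hxy : ‖y - x‖ = ‖x - y‖ := norm_sub_rev _ _
    rw [hxy] at h2
    have htri : |u x - u y| ≤ |u x| + |u y| := by
      have h := abs_sub_le (u x) 0 (u y)
      simpa using h
    nlinarith [htri, h1, h2,
      mul_nonneg (mul_nonneg hL (sub_nonneg.mpr ht12)) (norm_nonneg (x - y))]
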